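/- arXiv:2202.10531 — 5 statements merged into one kernel-verified Lean document; each statement's English description precedes it below -/
import Mathlib

section
/- Let G be a group equipped with a σ-finite left-invariant Borel measure μ and a left-invariant metric d, with measurable group operations; write |x| := d(x, e). Let 0 ≤ θ < 1, let K ∈ L¹(G, μ), let x₀ ∈ G, r > 0, and let b ∈ L¹(G, μ) be supported in the closed ball {y : d(y, x₀) ≤ r}. Set R := r^{1/(1-θ)} and assume 0 < μ(B(e,R)) < ∞, and let φ := μ(B(e,R))^{-1} 1_{B(e,R)}. Then ∫_{{x : d(x,x₀) ≥ 3r}} | (b ⋆ K)(x) - (b ⋆ φ ⋆ K)(x) | dμ(x) ≤ ‖b‖_{L¹} · sup_{y : |y| ≤ R} ∫_{{z : |z| ≥ 2r}} |K(y⁻¹ z) - K(z)| dμ(z). -/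
open MeasureTheory
open scoped ENNReal

/-- Convolution of two functions on a group `G` with respect to a measure `μ`:
`(u ⋆ v)(x) = ∫ u(y) v(y⁻¹ x) dμ(y)`. -/
noncomputable def groupConv {G : Type*} [Group G] [MeasurableSpace G]
    (μ : Measure G) (u v : G → ℂ) (x : G) : ℂ :=
  ∫ y, u y * v (y⁻¹ * x) ∂μ

lemma aux_estimate
    {G : Type*} [Group G] [MetricSpace G] [MeasurableSpace G] [BorelSpace G]
    [MeasurableMul₂ G] [MeasurableInv G]
    (μ : Measure G) [SigmaFinite μ] [μ.IsMulLeftInvariant]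
    (hd : ∀ a x y : G, dist (a * x) (a * y) = dist x y)
    (K : G → ℂ) (hKm : Measurable K) (hK : Integrable K μ)
    (x₀ : G) (r : ℝ)
    (b : G → ℂ) (hbm : Measurable b) (hb : Integrable b μ)
    (hbsupp : Function.support b ⊆ {y : G | dist y x₀ ≤ r})
    (R : ℝ)
    (hB0 : 0 < μ (Metric.ball (1 : G) R)) (hBfin : μ (Metric.ball (1 : G) R) < ⊤)
    (φ : G → ℂ)
    (hφ : φ = Set.indicator (Metric.ball (1 : G) R)
        (fun _ => (((μ (Metric.ball (1 : G) R)).toReal)⁻¹ : ℂ))) :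
    ∫⁻ x in {x : G | 3 * r ≤ dist x x₀},
        (‖groupConv μ b K x - groupConv μ (groupConv μ b φ) K x‖₊ : ℝ≥0∞) ∂μ ≤
      (∫⁻ y, (‖b y‖₊ : ℝ≥0∞) ∂μ) *
        ⨆ y ∈ {y : G | dist y 1 ≤ R},
          ∫⁻ z in {z : G | 2 * r ≤ dist z 1}, (‖K (y⁻¹ * z) - K z‖₊ : ℝ≥0∞) ∂μ := by
  -- basic set-up
  set B : Set G := Metric.ball (1 : G) R with hB
  have hBmeas : MeasurableSet B := measurableSet_ball
  have htR : (0 : ℝ) < (μ B).toReal := ENNReal.toReal_pos hB0.ne' hBfin.ne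
  -- facts about φ
  have hφm : Measurable φ := by
    rw [hφ]; exact measurable_const.indicator hBmeas
  have hφint : Integrable φ μ := by
    rw [hφ]
    exact (integrable_indicator_iff hBmeas).2 (integrableOn_const hBfin.ne)
  have hφ1 : ∫ t, φ t ∂μ = 1 := by
    rw [hφ, integral_indicator_const _ hBmeas]
    rw [Complex.real_smul]
    exact mul_inv_cancel₀ (by exact_mod_cast htR.ne')
  have hNφ : ∫⁻ t, (‖φ t‖₊ : ℝ≥0∞) ∂μ = 1 := by
    have h1 : ∀ t, ((‖φ t‖₊ : ℝ≥0∞)) =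
        B.indicator (fun _ => ((‖(((μ B).toReal)⁻¹ : ℂ)‖₊ : ℝ≥0∞))) t := by
      intro t
      by_cases h : t ∈ B <;> simp [hφ, Set.indicator_apply, h]
    rw [lintegral_congr h1, lintegral_indicator hBmeas, setLIntegral_const]
    have h2 : ((‖(((μ B).toReal)⁻¹ : ℂ)‖₊ : ℝ≥0∞)) = ENNReal.ofReal (((μ B).toReal)⁻¹) := by
      rw [← Complex.ofReal_inv, Complex.nnnorm_real]
      exact (Real.enorm_eq_ofReal (inv_nonneg.2 htR.le))
    rw [h2]
    set a := (μ B).toReal with ha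
    rw [show μ B = ENNReal.ofReal a from (ENNReal.ofReal_toReal hBfin.ne).symm,
      ← ENNReal.ofReal_mul (inv_nonneg.2 htR.le), inv_mul_cancel₀ htR.ne', ENNReal.ofReal_one]
  have hφsupp : ∀ t : G, φ t ≠ 0 → dist t 1 ≤ R := by
    intro t ht
    rw [hφ] at ht
    rcases Set.indicator_apply_ne_zero.1 ht with h
    exact le_of_lt (Metric.mem_ball.1 h.1)
  -- sets
  set A : Set G := {x : G | 3 * r ≤ dist x x₀} with hA
  have hAmeas : MeasurableSet A :=
    measurableSet_le measurable_const ((continuous_id.dist continuous_const).measurable)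
  set Z : Set G := {z : G | 2 * r ≤ dist z 1} with hZ
  have hZmeas : MeasurableSet Z :=
    measurableSet_le measurable_const ((continuous_id.dist continuous_const).measurable)
  set S : ℝ≥0∞ := ⨆ y ∈ {y : G | dist y 1 ≤ R},
      ∫⁻ z in Z, (‖K (y⁻¹ * z) - K z‖₊ : ℝ≥0∞) ∂μ with hSdef
  -- measurability helpers
  have mbn : Measurable fun y : G => (‖b y‖₊ : ℝ≥0∞) := hbm.enorm
  have mKn : Measurable fun z : G => (‖K z‖₊ : ℝ≥0∞) := hKm.enorm
  have mφn : Measurable fun t : G => (‖φ t‖₊ : ℝ≥0∞) := hφm.enorm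
  have m_im : Measurable fun p : G × G => p.2⁻¹ * p.1 := measurable_snd.inv.mul measurable_fst
  have m1 : Measurable fun p : G × G => (‖b p.2‖₊ : ℝ≥0∞) * ‖K (p.2⁻¹ * p.1)‖₊ :=
    (mbn.comp measurable_snd).mul (mKn.comp m_im)
  -- step A : a.e. integrability of y ↦ b y * K (y⁻¹ x)
  have hfinA : ∫⁻ x, (∫⁻ y, (‖b y‖₊ : ℝ≥0∞) * ‖K (y⁻¹ * x)‖₊ ∂μ) ∂μ ≠ ⊤ := by
    rw [lintegral_lintegral_swap m1.aemeasurable]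
    have e : ∀ y : G, ∫⁻ x, (‖b y‖₊ : ℝ≥0∞) * ‖K (y⁻¹ * x)‖₊ ∂μ
        = (‖b y‖₊ : ℝ≥0∞) * ∫⁻ z, (‖K z‖₊ : ℝ≥0∞) ∂μ := by
      intro y
      rw [lintegral_const_mul' _ _ ENNReal.coe_ne_top,
        lintegral_mul_left_eq_self (fun z => (‖K z‖₊ : ℝ≥0∞)) y⁻¹]
    rw [lintegral_congr e, lintegral_mul_const' (∫⁻ z, (‖K z‖₊ : ℝ≥0∞) ∂μ) _ hK.2.ne]
    exact ENNReal.mul_ne_top hb.2.ne hK.2.ne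
  have hA1 : ∀ᵐ x ∂μ, Integrable (fun y => b y * K (y⁻¹ * x)) μ := by
    filter_upwards [ae_lt_top m1.lintegral_prod_right' hfinA] with x hx
    refine ⟨(hbm.mul (hKm.comp (measurable_inv.mul_const x))).aestronglyMeasurable, ?_⟩
    have e : ∀ y : G, (‖b y * K (y⁻¹ * x)‖₊ : ℝ≥0∞) = (‖b y‖₊ : ℝ≥0∞) * ‖K (y⁻¹ * x)‖₊ := by
      intro y; rw [nnnorm_mul, ENNReal.coe_mul]
    show (∫⁻ y, (‖b y * K (y⁻¹ * x)‖₊ : ℝ≥0∞) ∂μ) < ⊤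
    rwa [lintegral_congr e]
  -- step B : a.e. finiteness of the triple integral
  have mW2 : Measurable fun q : (G × G) × G =>
      (‖φ q.2‖₊ : ℝ≥0∞) * ‖K (q.2⁻¹ * (q.1.2⁻¹ * q.1.1))‖₊ :=
    (mφn.comp measurable_snd).mul
      (mKn.comp (measurable_snd.inv.mul (m_im.comp measurable_fst)))
  have mJ : Measurable fun p : G × G =>
      ∫⁻ t, (‖φ t‖₊ : ℝ≥0∞) * ‖K (t⁻¹ * (p.2⁻¹ * p.1))‖₊ ∂μ :=
    mW2.lintegral_prod_right'
  have m2 : Measurable fun p : G × G =>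
      (‖b p.2‖₊ : ℝ≥0∞) * ∫⁻ t, (‖φ t‖₊ : ℝ≥0∞) * ‖K (t⁻¹ * (p.2⁻¹ * p.1))‖₊ ∂μ :=
    (mbn.comp measurable_snd).mul mJ
  have hfinB : ∫⁻ x, (∫⁻ y, (‖b y‖₊ : ℝ≥0∞) *
      ∫⁻ t, (‖φ t‖₊ : ℝ≥0∞) * ‖K (t⁻¹ * (y⁻¹ * x))‖₊ ∂μ ∂μ) ∂μ ≠ ⊤ := by
    rw [lintegral_lintegral_swap m2.aemeasurable]
    have e : ∀ y : G, ∫⁻ x, (‖b y‖₊ : ℝ≥0∞) *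
        (∫⁻ t, (‖φ t‖₊ : ℝ≥0∞) * ‖K (t⁻¹ * (y⁻¹ * x))‖₊ ∂μ) ∂μ
        = (‖b y‖₊ : ℝ≥0∞) * ∫⁻ z, (‖K z‖₊ : ℝ≥0∞) ∂μ := by
      intro y
      rw [lintegral_const_mul' _ _ ENNReal.coe_ne_top]
      congr 1
      have mw : Measurable fun p : G × G => (‖φ p.2‖₊ : ℝ≥0∞) * ‖K (p.2⁻¹ * (y⁻¹ * p.1))‖₊ :=
        (mφn.comp measurable_snd).mul
          (mKn.comp (measurable_snd.inv.mul (measurable_fst.const_mul y⁻¹)))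
      rw [lintegral_lintegral_swap mw.aemeasurable]
      have e2 : ∀ t : G, ∫⁻ x, (‖φ t‖₊ : ℝ≥0∞) * ‖K (t⁻¹ * (y⁻¹ * x))‖₊ ∂μ
          = (‖φ t‖₊ : ℝ≥0∞) * ∫⁻ z, (‖K z‖₊ : ℝ≥0∞) ∂μ := by
        intro t
        rw [lintegral_const_mul' _ _ ENNReal.coe_ne_top]
        congr 1
        have e3 : ∀ x : G, K (t⁻¹ * (y⁻¹ * x)) = K ((t⁻¹ * y⁻¹) * x) := by
          intro x; rw [mul_assoc]
        calc ∫⁻ x, (‖K (t⁻¹ * (y⁻¹ * x))‖₊ : ℝ≥0∞) ∂μ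
            = ∫⁻ x, (‖K ((t⁻¹ * y⁻¹) * x)‖₊ : ℝ≥0∞) ∂μ := by
              exact lintegral_congr fun x => by rw [e3]
          _ = ∫⁻ z, (‖K z‖₊ : ℝ≥0∞) ∂μ :=
              lintegral_mul_left_eq_self (fun z => (‖K z‖₊ : ℝ≥0∞)) (t⁻¹ * y⁻¹)
      rw [lintegral_congr e2, lintegral_mul_const' (∫⁻ z, (‖K z‖₊ : ℝ≥0∞) ∂μ) _ hK.2.ne, hNφ, one_mul]
    rw [lintegral_congr e, lintegral_mul_const' (∫⁻ z, (‖K z‖₊ : ℝ≥0∞) ∂μ) _ hK.2.ne]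
    exact ENNReal.mul_ne_top hb.2.ne hK.2.ne
  have hB1 : ∀ᵐ x ∂μ, (∫⁻ y, (‖b y‖₊ : ℝ≥0∞) *
      ∫⁻ t, (‖φ t‖₊ : ℝ≥0∞) * ‖K (t⁻¹ * (y⁻¹ * x))‖₊ ∂μ ∂μ) < ⊤ :=
    ae_lt_top m2.lintegral_prod_right' hfinB
  -- step C : a.e. integrability on the product
  have mP : ∀ x : G, Measurable fun q : G × G => b q.2 * φ (q.2⁻¹ * q.1) * K (q.1⁻¹ * x) := by
    intro x
    exact ((hbm.comp measurable_snd).mul (hφm.comp m_im)).mul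
      (hKm.comp (measurable_fst.inv.mul_const x))
  have mPn : Measurable fun p : G × (G × G) =>
      (‖b p.2.2‖₊ : ℝ≥0∞) * ‖φ (p.2.2⁻¹ * p.2.1)‖₊ * ‖K (p.2.1⁻¹ * p.1)‖₊ := by
    refine ((?_ : Measurable fun p : G × (G × G) => (‖b p.2.2‖₊ : ℝ≥0∞)).mul
      (?_ : Measurable fun p : G × (G × G) => (‖φ (p.2.2⁻¹ * p.2.1)‖₊ : ℝ≥0∞))).mul
      (?_ : Measurable fun p : G × (G × G) => (‖K (p.2.1⁻¹ * p.1)‖₊ : ℝ≥0∞))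
    · exact mbn.comp (measurable_snd.snd)
    · exact (hφm.comp (m_im.comp measurable_snd)).enorm
    · exact mKn.comp ((measurable_snd.fst.inv).mul measurable_fst)
  have hfinC : ∫⁻ x, (∫⁻ q : G × G,
      (‖b q.2‖₊ : ℝ≥0∞) * ‖φ (q.2⁻¹ * q.1)‖₊ * ‖K (q.1⁻¹ * x)‖₊ ∂(μ.prod μ)) ∂μ ≠ ⊤ := by
    rw [lintegral_lintegral_swap mPn.aemeasurable]
    have e : ∀ q : G × G, ∫⁻ x,
        (‖b q.2‖₊ : ℝ≥0∞) * ‖φ (q.2⁻¹ * q.1)‖₊ * ‖K (q.1⁻¹ * x)‖₊ ∂μ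
        = (‖b q.2‖₊ : ℝ≥0∞) * ‖φ (q.2⁻¹ * q.1)‖₊ * ∫⁻ z, (‖K z‖₊ : ℝ≥0∞) ∂μ := by
      intro q
      rw [lintegral_const_mul' _ _ (ENNReal.mul_ne_top ENNReal.coe_ne_top ENNReal.coe_ne_top),
        lintegral_mul_left_eq_self (fun z => (‖K z‖₊ : ℝ≥0∞)) q.1⁻¹]
    rw [lintegral_congr e, lintegral_mul_const' (∫⁻ z, (‖K z‖₊ : ℝ≥0∞) ∂μ) _ hK.2.ne]
    have e4 : ∫⁻ q : G × G, (‖b q.2‖₊ : ℝ≥0∞) * ‖φ (q.2⁻¹ * q.1)‖₊ ∂(μ.prod μ)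
        = ∫⁻ y, (‖b y‖₊ : ℝ≥0∞) ∂μ := by
      have mq : Measurable fun q : G × G => (‖b q.2‖₊ : ℝ≥0∞) * ‖φ (q.2⁻¹ * q.1)‖₊ :=
        (mbn.comp measurable_snd).mul ((hφm.comp m_im).enorm)
      rw [lintegral_prod _ mq.aemeasurable]
      rw [lintegral_lintegral_swap mq.aemeasurable]
      have e5 : ∀ y : G, ∫⁻ w, (‖b y‖₊ : ℝ≥0∞) * ‖φ (y⁻¹ * w)‖₊ ∂μ = (‖b y‖₊ : ℝ≥0∞) := by
        intro y
        rw [lintegral_const_mul' _ _ ENNReal.coe_ne_top,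
          lintegral_mul_left_eq_self (fun t => (‖φ t‖₊ : ℝ≥0∞)) y⁻¹, hNφ, mul_one]
      exact lintegral_congr e5
    rw [e4]
    exact ENNReal.mul_ne_top hb.2.ne hK.2.ne
  have mC : Measurable fun x : G => ∫⁻ q : G × G,
      (‖b q.2‖₊ : ℝ≥0∞) * ‖φ (q.2⁻¹ * q.1)‖₊ * ‖K (q.1⁻¹ * x)‖₊ ∂(μ.prod μ) :=
    mPn.lintegral_prod_right'
  have hC1 : ∀ᵐ x ∂μ, Integrable
      (fun q : G × G => b q.2 * φ (q.2⁻¹ * q.1) * K (q.1⁻¹ * x)) (μ.prod μ) := by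
    filter_upwards [ae_lt_top mC hfinC] with x hx
    refine ⟨(mP x).aestronglyMeasurable, ?_⟩
    have e : ∀ q : G × G, (‖b q.2 * φ (q.2⁻¹ * q.1) * K (q.1⁻¹ * x)‖₊ : ℝ≥0∞)
        = (‖b q.2‖₊ : ℝ≥0∞) * ‖φ (q.2⁻¹ * q.1)‖₊ * ‖K (q.1⁻¹ * x)‖₊ := by
      intro q; rw [nnnorm_mul, nnnorm_mul, ENNReal.coe_mul, ENNReal.coe_mul]
    show (∫⁻ q : G × G, (‖b q.2 * φ (q.2⁻¹ * q.1) * K (q.1⁻¹ * x)‖₊ : ℝ≥0∞) ∂(μ.prod μ)) < ⊤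
    rwa [lintegral_congr e]
  -- the key pointwise (a.e.) estimate
  have key : ∀ᵐ x ∂μ, (‖groupConv μ b K x - groupConv μ (groupConv μ b φ) K x‖₊ : ℝ≥0∞) ≤
      ∫⁻ y, (‖b y‖₊ : ℝ≥0∞) *
        ∫⁻ t, (‖φ t‖₊ : ℝ≥0∞) * ‖K (y⁻¹ * x) - K (t⁻¹ * (y⁻¹ * x))‖₊ ∂μ ∂μ := by
    filter_upwards [hA1, hB1, hC1] with x h1 h2 h3
    set I2 : G → ℂ := fun y => ∫ t, φ t * K (t⁻¹ * (y⁻¹ * x)) ∂μ with hI2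
    have hI2m : StronglyMeasurable I2 := by
      apply StronglyMeasurable.integral_prod_right'
        (f := fun q : G × G => φ q.2 * K (q.2⁻¹ * (q.1⁻¹ * x)))
      exact ((hφm.comp measurable_snd).mul
        (hKm.comp (measurable_snd.inv.mul (measurable_fst.inv.mul_const x)))).stronglyMeasurable
    have hg2 : Integrable (fun y => b y * I2 y) μ := by
      refine ⟨(hbm.stronglyMeasurable.mul hI2m).aestronglyMeasurable, ?_⟩
      show (∫⁻ y, (‖b y * I2 y‖₊ : ℝ≥0∞) ∂μ) < ⊤
      refine lt_of_le_of_lt (lintegral_mono fun y => ?_) h2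
      rw [nnnorm_mul, ENNReal.coe_mul]
      refine mul_le_mul_right ?_ _
      refine le_trans (enorm_integral_le_lintegral_enorm _) (lintegral_mono fun t => ?_)
      rw [enorm_mul]; exact le_rfl
    have heq2 : groupConv μ (groupConv μ b φ) K x = ∫ y, b y * I2 y ∂μ := by
      have e1 : groupConv μ (groupConv μ b φ) K x
          = ∫ w, (∫ y, b y * φ (y⁻¹ * w) * K (w⁻¹ * x) ∂μ) ∂μ := by
        unfold groupConv
        refine integral_congr_ae (Filter.Eventually.of_forall fun w => ?_)
        exact (integral_mul_const (K (w⁻¹ * x)) fun y => b y * φ (y⁻¹ * w)).symm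
      rw [e1, integral_integral_swap h3]
      refine integral_congr_ae (Filter.Eventually.of_forall fun y => ?_)
      have e2 := integral_mul_left_eq_self (μ := μ) (fun w => b y * φ (y⁻¹ * w) * K (w⁻¹ * x)) y
      have e3 : ∀ t : G, b y * φ (y⁻¹ * (y * t)) * K ((y * t)⁻¹ * x)
          = b y * (φ t * K (t⁻¹ * (y⁻¹ * x))) := by
        intro t
        rw [inv_mul_cancel_left, mul_inv_rev, mul_assoc, mul_assoc]
      refine e2.symm.trans ?_
      refine (integral_congr_ae (Filter.Eventually.of_forall e3)).trans ?_
      exact integral_const_mul (b y) _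
    have hsub : groupConv μ b K x - groupConv μ (groupConv μ b φ) K x
        = ∫ y, (b y * K (y⁻¹ * x) - b y * I2 y) ∂μ := by
      rw [heq2]
      exact (integral_sub h1 hg2).symm
    rw [hsub]
    refine le_trans (enorm_integral_le_lintegral_enorm _) (lintegral_mono_ae ?_)
    have hy2 : ∀ᵐ y ∂μ, (‖b y‖₊ : ℝ≥0∞) *
        (∫⁻ t, (‖φ t‖₊ : ℝ≥0∞) * ‖K (t⁻¹ * (y⁻¹ * x))‖₊ ∂μ) < ⊤ := by
      refine ae_lt_top ?_ h2.ne
      exact mbn.mul (Measurable.lintegral_prod_right'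
        (f := fun q : G × G => (‖φ q.2‖₊ : ℝ≥0∞) * ‖K (q.2⁻¹ * (q.1⁻¹ * x))‖₊)
        ((mφn.comp measurable_snd).mul
          (mKn.comp (measurable_snd.inv.mul (measurable_fst.inv.mul_const x)))))
    filter_upwards [hy2] with y hy
    rw [← mul_sub, enorm_mul]
    by_cases hb0 : b y = 0
    · simp [hb0]
    refine mul_le_mul_right ?_ _
    have hbne : (‖b y‖₊ : ℝ≥0∞) ≠ 0 := by simpa using hb0
    have hfin : (∫⁻ t, (‖φ t‖₊ : ℝ≥0∞) * ‖K (t⁻¹ * (y⁻¹ * x))‖₊ ∂μ) < ⊤ := by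
      by_contra hcon
      rw [not_lt, top_le_iff] at hcon
      rw [hcon, ENNReal.mul_top hbne] at hy
      exact (lt_irrefl _ hy)
    have hint : Integrable (fun t => φ t * K (t⁻¹ * (y⁻¹ * x))) μ := by
      refine ⟨(hφm.mul (hKm.comp (measurable_inv.mul_const _))).aestronglyMeasurable, ?_⟩
      show (∫⁻ t, (‖φ t * K (t⁻¹ * (y⁻¹ * x))‖₊ : ℝ≥0∞) ∂μ) < ⊤
      refine lt_of_le_of_lt (le_of_eq (lintegral_congr fun t => ?_)) hfin
      rw [nnnorm_mul, ENNReal.coe_mul]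
    have hconst : Integrable (fun t => φ t * K (y⁻¹ * x)) μ := hφint.mul_const _
    have e4 : K (y⁻¹ * x) - I2 y
        = ∫ t, (φ t * K (y⁻¹ * x) - φ t * K (t⁻¹ * (y⁻¹ * x))) ∂μ := by
      rw [integral_sub hconst hint, integral_mul_const, hφ1, one_mul]
    rw [e4]
    refine le_trans (enorm_integral_le_lintegral_enorm _) (lintegral_mono fun t => ?_)
    rw [← mul_sub, enorm_mul]; exact le_rfl
  -- put everything together
  have mW3 : Measurable fun q : (G × G) × G => (‖φ q.2‖₊ : ℝ≥0∞) *
      ‖K (q.1.2⁻¹ * q.1.1) - K (q.2⁻¹ * (q.1.2⁻¹ * q.1.1))‖₊ := by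
    refine (mφn.comp measurable_snd).mul (Measurable.coe_nnreal_ennreal (Measurable.nnnorm ?_))
    exact (hKm.comp (m_im.comp measurable_fst)).sub
      (hKm.comp (measurable_snd.inv.mul (m_im.comp measurable_fst)))
  have mJ3 : Measurable fun p : G × G =>
      ∫⁻ t, (‖φ t‖₊ : ℝ≥0∞) * ‖K (p.2⁻¹ * p.1) - K (t⁻¹ * (p.2⁻¹ * p.1))‖₊ ∂μ :=
    mW3.lintegral_prod_right'
  have m3 : Measurable fun p : G × G => (‖b p.2‖₊ : ℝ≥0∞) *
      ∫⁻ t, (‖φ t‖₊ : ℝ≥0∞) * ‖K (p.2⁻¹ * p.1) - K (t⁻¹ * (p.2⁻¹ * p.1))‖₊ ∂μ :=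
    (mbn.comp measurable_snd).mul mJ3
  calc ∫⁻ x in A, (‖groupConv μ b K x - groupConv μ (groupConv μ b φ) K x‖₊ : ℝ≥0∞) ∂μ
      ≤ ∫⁻ x in A, (∫⁻ y, (‖b y‖₊ : ℝ≥0∞) *
          ∫⁻ t, (‖φ t‖₊ : ℝ≥0∞) * ‖K (y⁻¹ * x) - K (t⁻¹ * (y⁻¹ * x))‖₊ ∂μ ∂μ) ∂μ :=
        lintegral_mono_ae (ae_restrict_of_ae key)
    _ = ∫⁻ y, (∫⁻ x in A, (‖b y‖₊ : ℝ≥0∞) *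
          ∫⁻ t, (‖φ t‖₊ : ℝ≥0∞) * ‖K (y⁻¹ * x) - K (t⁻¹ * (y⁻¹ * x))‖₊ ∂μ ∂μ) ∂μ :=
        lintegral_lintegral_swap m3.aemeasurable
    _ ≤ ∫⁻ y, (‖b y‖₊ : ℝ≥0∞) * S ∂μ := by
        refine lintegral_mono fun y => ?_
        rw [lintegral_const_mul' _ _ ENNReal.coe_ne_top]
        by_cases hb0 : b y = 0
        · simp [hb0]
        refine mul_le_mul_right ?_ _
        have hy : dist y x₀ ≤ r := hbsupp hb0
        have mw4 : Measurable fun p : G × G => (‖φ p.2‖₊ : ℝ≥0∞) *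
            ‖K (y⁻¹ * p.1) - K (p.2⁻¹ * (y⁻¹ * p.1))‖₊ := by
          refine (mφn.comp measurable_snd).mul (Measurable.coe_nnreal_ennreal (Measurable.nnnorm ?_))
          exact (hKm.comp (measurable_fst.const_mul y⁻¹)).sub
            (hKm.comp (measurable_snd.inv.mul (measurable_fst.const_mul y⁻¹)))
        rw [lintegral_lintegral_swap mw4.aemeasurable]
        have e6 : ∀ t : G, ∫⁻ x in A, (‖φ t‖₊ : ℝ≥0∞) *
            ‖K (y⁻¹ * x) - K (t⁻¹ * (y⁻¹ * x))‖₊ ∂μ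
            = (‖φ t‖₊ : ℝ≥0∞) *
              ∫⁻ x in A, (‖K (y⁻¹ * x) - K (t⁻¹ * (y⁻¹ * x))‖₊ : ℝ≥0∞) ∂μ :=
          fun t => lintegral_const_mul' _ _ ENNReal.coe_ne_top
        rw [lintegral_congr e6]
        calc ∫⁻ t, (‖φ t‖₊ : ℝ≥0∞) *
              (∫⁻ x in A, (‖K (y⁻¹ * x) - K (t⁻¹ * (y⁻¹ * x))‖₊ : ℝ≥0∞) ∂μ) ∂μ
            ≤ ∫⁻ t, (‖φ t‖₊ : ℝ≥0∞) * S ∂μ := by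
              refine lintegral_mono fun t => ?_
              by_cases hφ0 : φ t = 0
              · simp [hφ0]
              refine mul_le_mul_right ?_ _
              have ht : dist t 1 ≤ R := hφsupp t hφ0
              have hEle : (∫⁻ x in A, (‖K (y⁻¹ * x) - K (t⁻¹ * (y⁻¹ * x))‖₊ : ℝ≥0∞) ∂μ)
                  ≤ ∫⁻ z in Z, (‖K (t⁻¹ * z) - K z‖₊ : ℝ≥0∞) ∂μ := by
                rw [← lintegral_indicator hAmeas, ← lintegral_indicator hZmeas,
                  ← lintegral_mul_left_eq_self
                    (fun x => A.indicator
                      (fun x => (‖K (y⁻¹ * x) - K (t⁻¹ * (y⁻¹ * x))‖₊ : ℝ≥0∞)) x) y]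
                refine lintegral_mono fun z => ?_
                by_cases hz : (y * z) ∈ A
                · have h2r : z ∈ Z := by
                    have h3 : 3 * r ≤ dist (y * z) x₀ := hz
                    have h4 : dist (y * z) x₀ ≤ dist (y * z) y + dist y x₀ :=
                      dist_triangle _ _ _
                    have h5 : dist (y * z) y = dist z 1 := by
                      have := hd y z 1; rwa [mul_one] at this
                    show 2 * r ≤ dist z 1
                    rw [← h5]; linarith
                  rw [Set.indicator_of_mem hz, Set.indicator_of_mem h2r,
                    inv_mul_cancel_left]
                  exact le_of_eq (by rw [← neg_sub, nnnorm_neg])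
                · rw [Set.indicator_of_notMem hz]; exact zero_le
              rw [hSdef]
              exact le_trans hEle
                (le_biSup (fun y => ∫⁻ z in Z, (‖K (y⁻¹ * z) - K z‖₊ : ℝ≥0∞) ∂μ)
                  (show t ∈ {y : G | dist y 1 ≤ R} from ht))
          _ = S := by rw [lintegral_mul_const _ mφn, hNφ, one_mul]
    _ = (∫⁻ y, (‖b y‖₊ : ℝ≥0∞) ∂μ) * S := lintegral_mul_const _ mbn


/-- **Mollification error estimate for the bad part.** If `b` is supported in the closed ball
of radius `r` about `x₀`, `R = r^(1/(1-θ))` and `φ` is the normalized indicator of `B(e,R)`,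
then `∫_{d(x,x₀) ≥ 3r} |(b ⋆ K)(x) - (b ⋆ φ ⋆ K)(x)| dμ(x)` is bounded by
`‖b‖_{L¹} · sup_{|y| ≤ R} ∫_{|z| ≥ 2r} |K(y⁻¹z) - K(z)| dμ(z)`. -/
theorem bad_part_mollification_estimate
    {G : Type*} [Group G] [MetricSpace G] [MeasurableSpace G] [BorelSpace G]
    [MeasurableMul₂ G] [MeasurableInv G]
    (μ : Measure G) [SigmaFinite μ] [μ.IsMulLeftInvariant]
    (hd : ∀ a x y : G, dist (a * x) (a * y) = dist x y)
    (θ : ℝ) (hθ0 : 0 ≤ θ) (hθ1 : θ < 1)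
    (K : G → ℂ) (hK : Integrable K μ)
    (x₀ : G) (r : ℝ) (hr : 0 < r)
    (b : G → ℂ) (hb : Integrable b μ)
    (hbsupp : Function.support b ⊆ {y : G | dist y x₀ ≤ r})
    (R : ℝ) (hRr : R = r ^ ((1 : ℝ) / (1 - θ)))
    (hB0 : 0 < μ (Metric.ball (1 : G) R)) (hBfin : μ (Metric.ball (1 : G) R) < ⊤)
    (φ : G → ℂ)
    (hφ : φ = Set.indicator (Metric.ball (1 : G) R)
        (fun _ => (((μ (Metric.ball (1 : G) R)).toReal)⁻¹ : ℂ))) :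
    ∫⁻ x in {x : G | 3 * r ≤ dist x x₀},
        (‖groupConv μ b K x - groupConv μ (groupConv μ b φ) K x‖₊ : ℝ≥0∞) ∂μ ≤
      (∫⁻ y, (‖b y‖₊ : ℝ≥0∞) ∂μ) *
        ⨆ y ∈ {y : G | dist y 1 ≤ R},
          ∫⁻ z in {z : G | 2 * r ≤ dist z 1}, (‖K (y⁻¹ * z) - K z‖₊ : ℝ≥0∞) ∂μ := by
  classical
  -- replace `b` and `K` by measurable representatives
  set D : Set G := {y : G | dist y x₀ ≤ r} with hD
  have hDmeas : MeasurableSet D :=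
    measurableSet_le ((continuous_id.dist continuous_const).measurable) measurable_const
  set b' : G → ℂ := D.indicator (hb.1.mk b) with hb'def
  have hb'm : Measurable b' := (hb.1.measurable_mk).indicator hDmeas
  have hbb' : b =ᵐ[μ] b' := by
    filter_upwards [hb.1.ae_eq_mk] with y hy
    by_cases h : y ∈ D
    · rw [hb'def, Set.indicator_of_mem h, ← hy]
    · rw [hb'def, Set.indicator_of_notMem h]
      by_contra hne
      exact h (hbsupp hne)
  have hb' : Integrable b' μ := hb.congr hbb'
  have hb'supp : Function.support b' ⊆ D := Set.support_indicator_subset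
  set K' : G → ℂ := hK.1.mk K with hK'def
  have hK'm : Measurable K' := hK.1.measurable_mk
  have hKK' : K =ᵐ[μ] K' := hK.1.ae_eq_mk
  have hK' : Integrable K' μ := hK.congr hKK'
  -- the null set where K and K' differ
  set N : Set G := toMeasurable μ {z : G | K z ≠ K' z} with hN
  have hNmeas : MeasurableSet N := measurableSet_toMeasurable _ _
  have hNnull : μ N = 0 := by
    rw [hN, measure_toMeasurable]
    exact hKK'
  have hNsub : {z : G | K z ≠ K' z} ⊆ N := subset_toMeasurable _ _
  -- a.e. x, a.e. y, K (y⁻¹ x) = K' (y⁻¹ x)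
  have hKae : ∀ᵐ x ∂μ, ∀ᵐ y ∂μ, K (y⁻¹ * x) = K' (y⁻¹ * x) := by
    set T : Set (G × G) := {p : G × G | p.2⁻¹ * p.1 ∈ N} with hT
    have hTmeas : MeasurableSet T := (measurable_snd.inv.mul measurable_fst) hNmeas
    have hT'meas : MeasurableSet (Prod.swap ⁻¹' T : Set (G × G)) :=
      measurable_swap hTmeas
    have hT'null : (μ.prod μ) (Prod.swap ⁻¹' T) = 0 := by
      rw [Measure.prod_apply hT'meas]
      have e : ∀ y : G, μ (Prod.mk y ⁻¹' (Prod.swap ⁻¹' T)) = 0 := by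
        intro y
        have : (Prod.mk y ⁻¹' (Prod.swap ⁻¹' T)) = (fun x => y⁻¹ * x) ⁻¹' N := rfl
        rw [this, (measurePreserving_mul_left μ y⁻¹).measure_preimage
          hNmeas.nullMeasurableSet, hNnull]
      simp only [e, lintegral_zero]
    have hTnull : (μ.prod μ) T = 0 := by
      have : T = Prod.swap ⁻¹' (Prod.swap ⁻¹' T) := by
        ext p; simp [hT]
      rw [this, ← Measure.map_apply measurable_swap hT'meas, Measure.prod_swap]
      exact hT'null
    have := Measure.measure_ae_null_of_prod_null hTnull
    filter_upwards [this] with x hx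
    have : μ {y : G | y⁻¹ * x ∈ N} = 0 := hx
    have hsub : {y : G | K (y⁻¹ * x) ≠ K' (y⁻¹ * x)} ⊆ {y : G | y⁻¹ * x ∈ N} :=
      fun y hy => hNsub hy
    exact measure_mono_null hsub this
  -- a.e. equality of the convolutions
  have hL1 : ∀ᵐ x ∂μ, groupConv μ b K x = groupConv μ b' K' x := by
    filter_upwards [hKae] with x hx
    unfold groupConv
    refine integral_congr_ae ?_
    filter_upwards [hbb', hx] with y h1 h2
    rw [h1, h2]
  have hc : groupConv μ b φ = groupConv μ b' φ := by
    funext w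
    unfold groupConv
    refine integral_congr_ae ?_
    filter_upwards [hbb'] with y h1
    rw [h1]
  have hL2 : ∀ᵐ x ∂μ, groupConv μ (groupConv μ b φ) K x
      = groupConv μ (groupConv μ b' φ) K' x := by
    filter_upwards [hKae] with x hx
    rw [← hc]
    unfold groupConv
    refine integral_congr_ae ?_
    filter_upwards [hx] with w h2
    rw [h2]
  -- rewrite both sides
  have hLHS : ∫⁻ x in {x : G | 3 * r ≤ dist x x₀},
      (‖groupConv μ b K x - groupConv μ (groupConv μ b φ) K x‖₊ : ℝ≥0∞) ∂μ
      = ∫⁻ x in {x : G | 3 * r ≤ dist x x₀},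
      (‖groupConv μ b' K' x - groupConv μ (groupConv μ b' φ) K' x‖₊ : ℝ≥0∞) ∂μ := by
    refine lintegral_congr_ae (ae_restrict_of_ae ?_)
    filter_upwards [hL1, hL2] with x h1 h2
    rw [h1, h2]
  have hNb : ∫⁻ y, (‖b y‖₊ : ℝ≥0∞) ∂μ = ∫⁻ y, (‖b' y‖₊ : ℝ≥0∞) ∂μ := by
    refine lintegral_congr_ae ?_
    filter_upwards [hbb'] with y hy
    rw [hy]
  have hSup : (⨆ y ∈ {y : G | dist y 1 ≤ R},
        ∫⁻ z in {z : G | 2 * r ≤ dist z 1}, (‖K (y⁻¹ * z) - K z‖₊ : ℝ≥0∞) ∂μ)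
      = ⨆ y ∈ {y : G | dist y 1 ≤ R},
        ∫⁻ z in {z : G | 2 * r ≤ dist z 1}, (‖K' (y⁻¹ * z) - K' z‖₊ : ℝ≥0∞) ∂μ := by
    refine iSup_congr fun y => iSup_congr fun hy => ?_
    refine lintegral_congr_ae (ae_restrict_of_ae ?_)
    have h1 : (fun z => K (y⁻¹ * z)) =ᵐ[μ] fun z => K' (y⁻¹ * z) :=
      (measurePreserving_mul_left μ y⁻¹).quasiMeasurePreserving.ae_eq_comp hKK'
    filter_upwards [h1, hKK'] with z e1 e2
    rw [e1, e2]
  rw [hLHS, hNb, hSup]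
  exact aux_estimate μ hd K' hK'm hK' x₀ r b' hb'm hb' hb'supp R hB0 hBfin φ hφ
end

section
/- Let n ≥ 1, 0 < θ < 1, C ≥ 0, and let K : ℝⁿ → ℂ be differentiable at every x ≠ 0 with ‖DK(x)‖ ≤ C ‖x‖^{-n-1-θ/(1-θ)} for all x ≠ 0. Then there exists a constant A > 0, depending only on n and θ, such that for every R with 0 < R ≤ 1 and every y ∈ ℝⁿ with ‖y‖ ≤ R one has ∫_{{x : ‖x‖ ≥ 2R^{1-θ}}} |K(x - y) - K(x)| dx ≤ A C. -/
open MeasureTheory Metric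
open scoped ENNReal

/-- **The gradient estimate implies the oscillating Hörmander condition.** If `K : ℝⁿ → ℂ`
is differentiable away from the origin with `‖DK(x)‖ ≤ C ‖x‖^(-n-1-θ/(1-θ))`, then there is
a constant `A > 0` depending only on `n` and `θ` such that for all `0 < R ≤ 1` and `‖y‖ ≤ R`,
`∫_{‖x‖ ≥ 2R^(1-θ)} |K(x-y) - K(x)| dx ≤ A C`. -/
theorem gradient_bound_implies_oscillating_hormander
    (n : ℕ) (hn : 1 ≤ n) (θ : ℝ) (hθ0 : 0 < θ) (hθ1 : θ < 1) :
    ∃ A : ℝ, 0 < A ∧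
      ∀ C : ℝ, 0 ≤ C →
        ∀ K : EuclideanSpace ℝ (Fin n) → ℂ,
          (∀ x : EuclideanSpace ℝ (Fin n), x ≠ 0 → DifferentiableAt ℝ K x) →
          (∀ x : EuclideanSpace ℝ (Fin n), x ≠ 0 →
            ‖fderiv ℝ K x‖ ≤ C * ‖x‖ ^ (-(n : ℝ) - 1 - θ / (1 - θ))) →
          ∀ R : ℝ, 0 < R → R ≤ 1 →
            ∀ y : EuclideanSpace ℝ (Fin n), ‖y‖ ≤ R →
              ∫⁻ x in {x : EuclideanSpace ℝ (Fin n) | 2 * R ^ (1 - θ) ≤ ‖x‖},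
                  (‖K (x - y) - K x‖₊ : ℝ≥0∞) ≤ ENNReal.ofReal (A * C) := by
  classical
  haveI : Nontrivial (EuclideanSpace ℝ (Fin n)) := by
    apply Module.nontrivial_of_finrank_pos (R := ℝ)
    rw [finrank_euclideanSpace_fin]; exact hn
  have h1θ : (0:ℝ) < 1 - θ := by linarith
  obtain ⟨q, hq⟩ : ∃ q : ℝ, q = 1 / (1 - θ) := ⟨_, rfl⟩
  have hq0 : 0 < q := by rw [hq]; positivity
  have h1θq : (1 - θ) * q = 1 := by
    rw [hq, mul_one_div, div_self h1θ.ne']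
  have h2q : (2:ℝ) ^ (-q) < 1 :=
    Real.rpow_lt_one_of_one_lt_of_neg one_lt_two (by linarith)
  have h2qpos : (0:ℝ) < 2 ^ (-q) := Real.rpow_pos_of_pos two_pos _
  obtain ⟨v, hv⟩ : ∃ v : ℝ,
      v = (volume (ball (0 : EuclideanSpace ℝ (Fin n)) 1)).toReal := ⟨_, rfl⟩
  have hVfin : volume (ball (0 : EuclideanSpace ℝ (Fin n)) 1) ≠ ⊤ := measure_ball_lt_top.ne
  have hvpos : 0 < v := by
    rw [hv]; exact ENNReal.toReal_pos (measure_ball_pos _ _ one_pos).ne' hVfin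
  have h1m2q : (0:ℝ) < 1 - 2 ^ (-q) := by linarith
  refine ⟨2 ^ (2*n) * v * (1 - 2 ^ (-q))⁻¹, by positivity, ?_⟩
  intro C hC K hKdiff hKbound R hR0 hR1 y hy
  obtain ⟨p, hp⟩ : ∃ p : ℝ, p = (n:ℝ) + q := ⟨_, rfl⟩
  have hp0 : 0 < p := by rw [hp]; positivity
  have hpn : -(n : ℝ) - 1 - θ / (1 - θ) = -p := by
    rw [hp, hq]; field_simp; ring
  obtain ⟨r, hr⟩ : ∃ r : ℝ, r = 2 * R ^ (1 - θ) := ⟨_, rfl⟩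
  have hRθpos : 0 < R ^ (1 - θ) := Real.rpow_pos_of_pos hR0 _
  have hr0 : 0 < r := by rw [hr]; positivity
  have hRr : R ≤ R ^ (1 - θ) := by
    have := Real.rpow_le_rpow_of_exponent_ge hR0 hR1 (by linarith : 1 - θ ≤ 1)
    rwa [Real.rpow_one] at this
  obtain ⟨M, hM⟩ : ∃ M : ℝ, M = C * R * 2 ^ p := ⟨_, rfl⟩
  have h2p : (0:ℝ) < 2 ^ p := Real.rpow_pos_of_pos two_pos p
  have hM0 : 0 ≤ M := by rw [hM]; positivity
  -- pointwise bound on the region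
  have hpt : ∀ x : EuclideanSpace ℝ (Fin n), r ≤ ‖x‖ →
      ‖K (x - y) - K x‖ ≤ M * ‖x‖ ^ (-p) := by
    intro x hx
    have hxpos : 0 < ‖x‖ := lt_of_lt_of_le hr0 hx
    have hyx2 : ‖y‖ ≤ ‖x‖ / 2 := by
      refine hy.trans (hRr.trans ?_)
      rw [hr] at hx; linarith
    have hseg : ∀ z ∈ segment ℝ (x - y) x, ‖x‖ / 2 ≤ ‖z‖ := by
      rintro z ⟨a, b, ha, hb, hab, rfl⟩
      have hz : a • (x - y) + b • x = x - a • y := by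
        rw [smul_sub]
        rw [show a • x - a • y + b • x = (a + b) • x - a • y by
          rw [add_smul]; abel]
        rw [hab, one_smul]
      rw [hz]
      have h1 : ‖a • y‖ ≤ ‖y‖ := by
        rw [norm_smul, Real.norm_eq_abs, abs_of_nonneg ha]
        nlinarith [norm_nonneg y]
      have h2 : ‖x‖ - ‖a • y‖ ≤ ‖x - a • y‖ := norm_sub_norm_le _ _
      linarith
    have hsegne : ∀ z ∈ segment ℝ (x - y) x, z ≠ 0 := by
      intro z hz
      have := hseg z hz
      have : 0 < ‖z‖ := lt_of_lt_of_le (by linarith) this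
      exact norm_pos_iff.mp this
    have hbound : ∀ z ∈ segment ℝ (x - y) x,
        ‖fderiv ℝ K z‖ ≤ C * (‖x‖ / 2) ^ (-p) := by
      intro z hz
      refine (hKbound z (hsegne z hz)).trans ?_
      rw [hpn]
      exact mul_le_mul_of_nonneg_left
        (Real.rpow_le_rpow_of_nonpos (by positivity) (hseg z hz) (by linarith)) hC
    have hmvt := (convex_segment (x - y) x).norm_image_sub_le_of_norm_hasFDerivWithin_le
      (f' := fun z => fderiv ℝ K z)
      (fun z hz => ((hKdiff z (hsegne z hz)).hasFDerivAt).hasFDerivWithinAt)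
      hbound (right_mem_segment ℝ (x - y) x) (left_mem_segment ℝ (x - y) x)
    have hxy : x - y - x = -y := by abel
    rw [hxy, norm_neg] at hmvt
    have hhalf : (‖x‖ / 2) ^ (-p) = 2 ^ p * ‖x‖ ^ (-p) := by
      rw [Real.div_rpow (norm_nonneg x) (by norm_num : (0:ℝ) ≤ 2),
        Real.rpow_neg (by norm_num : (0:ℝ) ≤ 2)]
      field_simp
    calc ‖K (x - y) - K x‖ ≤ C * (‖x‖ / 2) ^ (-p) * ‖y‖ := hmvt
      _ = C * (2 ^ p * ‖x‖ ^ (-p)) * ‖y‖ := by rw [hhalf]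
      _ ≤ C * (2 ^ p * ‖x‖ ^ (-p)) * R := by
          apply mul_le_mul_of_nonneg_left hy (by positivity)
      _ = M * ‖x‖ ^ (-p) := by rw [hM]; ring
  -- annuli
  set A : ℕ → Set (EuclideanSpace ℝ (Fin n)) :=
    fun k => {x | r * 2 ^ k ≤ ‖x‖ ∧ ‖x‖ < r * 2 ^ (k + 1)} with hA
  have hSsub : {x : EuclideanSpace ℝ (Fin n) | 2 * R ^ (1 - θ) ≤ ‖x‖} ⊆ ⋃ k, A k := by
    intro x hx
    have hx' : r ≤ ‖x‖ := by rw [hr]; exact hx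
    have h1 : (1:ℝ) ≤ ‖x‖ / r := (one_le_div hr0).2 hx'
    obtain ⟨k, hk1, hk2⟩ := exists_nat_pow_near h1 one_lt_two
    refine Set.mem_iUnion.2 ⟨k, ?_, ?_⟩
    · rw [mul_comm]; exact (le_div_iff₀ hr0).mp hk1
    · have := (div_lt_iff₀ hr0).mp hk2; linarith [this]
  set g : EuclideanSpace ℝ (Fin n) → ℝ≥0∞ :=
    fun x => ENNReal.ofReal (M * ‖x‖ ^ (-p)) with hg
  have hSmeas : MeasurableSet {x : EuclideanSpace ℝ (Fin n) | 2 * R ^ (1 - θ) ≤ ‖x‖} :=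
    measurableSet_le measurable_const measurable_norm
  have two_rpow_add : ∀ a b : ℝ, (2:ℝ) ^ a * 2 ^ b = 2 ^ (a + b) :=
    fun a b => (Real.rpow_add two_pos a b).symm
  -- key real identity per annulus
  have hterm : ∀ k : ℕ, M * (r * 2 ^ k) ^ (-p) * (r * 2 ^ (k + 1)) ^ n
      = C * 2 ^ (2 * n) * ((2:ℝ) ^ (-q)) ^ k := by
    intro k
    have h2k : (0:ℝ) < 2 ^ k := by positivity
    have e1 : (r * 2 ^ k) ^ (-p) = r ^ (-p) * ((2:ℝ) ^ ((k:ℝ))) ^ (-p) := by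
      rw [Real.mul_rpow hr0.le h2k.le, Real.rpow_natCast]
    have hb : ((2:ℝ) ^ (k+1) : ℝ) = (2:ℝ) ^ ((k:ℝ) + 1) := by
      rw [← Real.rpow_natCast (2:ℝ) (k+1)]
      push_cast
      ring_nf
    have e2 : ((r * 2 ^ (k+1)) : ℝ) ^ n = r ^ ((n:ℝ)) * ((2:ℝ) ^ ((k:ℝ) + 1)) ^ ((n:ℝ)) := by
      rw [Real.rpow_natCast r n, Real.rpow_natCast _ n, mul_pow, hb]
    have e3 : r ^ (-p) * r ^ ((n:ℝ)) = r ^ (-q) := by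
      rw [← Real.rpow_add hr0]; congr 1; rw [hp]; ring
    have e4 : r ^ (-q) = 2 ^ (-q) * R⁻¹ := by
      rw [hr, Real.mul_rpow (by norm_num : (0:ℝ) ≤ 2) hRθpos.le,
        ← Real.rpow_mul hR0.le,
        show (1 - θ) * (-q) = -1 by rw [mul_neg, h1θq],
        Real.rpow_neg_one]
    have e5 : ((2:ℝ) ^ ((k:ℝ))) ^ (-p) = (2:ℝ) ^ ((k:ℝ) * (-p)) := by
      rw [← Real.rpow_mul (by norm_num : (0:ℝ) ≤ 2)]
    have e6 : ((2:ℝ) ^ ((k:ℝ) + 1)) ^ ((n:ℝ)) = (2:ℝ) ^ (((k:ℝ) + 1) * (n:ℝ)) := by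
      rw [← Real.rpow_mul (by norm_num : (0:ℝ) ≤ 2)]
    have e7 : ((2:ℝ) ^ (-q)) ^ k = (2:ℝ) ^ ((k:ℝ) * (-q)) := by
      rw [← Real.rpow_natCast ((2:ℝ) ^ (-q)) k,
        ← Real.rpow_mul (by norm_num : (0:ℝ) ≤ 2)]
      ring_nf
    have e8 : ((2:ℝ) ^ (2*n) : ℝ) = (2:ℝ) ^ (((2*n : ℕ)) : ℝ) := by
      rw [Real.rpow_natCast]
    rw [e1, e2, hM, e5, e6]
    calc C * R * 2 ^ p * (r ^ (-p) * (2:ℝ) ^ ((k:ℝ) * (-p)))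
          * (r ^ ((n:ℝ)) * (2:ℝ) ^ (((k:ℝ) + 1) * (n:ℝ)))
        = C * (R * (r ^ (-p) * r ^ ((n:ℝ))))
            * ((2:ℝ) ^ p * ((2:ℝ) ^ ((k:ℝ) * (-p)) * (2:ℝ) ^ (((k:ℝ) + 1) * (n:ℝ)))) := by
          ring
      _ = C * (R * (2 ^ (-q) * R⁻¹))
            * ((2:ℝ) ^ p * (2:ℝ) ^ ((k:ℝ) * (-p) + ((k:ℝ) + 1) * (n:ℝ))) := by
          rw [e3, e4, two_rpow_add]
      _ = C * (2:ℝ) ^ (-q)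
            * ((2:ℝ) ^ (p + ((k:ℝ) * (-p) + ((k:ℝ) + 1) * (n:ℝ)))) := by
          rw [show R * ((2:ℝ) ^ (-q) * R⁻¹) = (2:ℝ) ^ (-q) * (R * R⁻¹) by ring,
            mul_inv_cancel₀ hR0.ne', mul_one, two_rpow_add]
      _ = C * ((2:ℝ) ^ (-q) * (2:ℝ) ^ (p + ((k:ℝ) * (-p) + ((k:ℝ) + 1) * (n:ℝ)))) := by
          ring
      _ = C * (2:ℝ) ^ (-q + (p + ((k:ℝ) * (-p) + ((k:ℝ) + 1) * (n:ℝ)))) := by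
          rw [two_rpow_add]
      _ = C * (2:ℝ) ^ ((((2*n : ℕ)) : ℝ) + (k:ℝ) * (-q)) := by
          congr 1
          rw [hp]
          push_cast
          ring_nf
      _ = C * ((2:ℝ) ^ (((2*n : ℕ)) : ℝ) * (2:ℝ) ^ ((k:ℝ) * (-q))) := by
          rw [two_rpow_add]
      _ = C * 2 ^ (2 * n) * ((2:ℝ) ^ (-q)) ^ k := by
          rw [← e7, ← e8]; ring
  -- bound integral over each annulus
  have hAk : ∀ k : ℕ, ∫⁻ x in A k, g x ∂volume
      ≤ ENNReal.ofReal (C * 2 ^ (2 * n) * v) * (ENNReal.ofReal ((2:ℝ) ^ (-q))) ^ k := by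
    intro k
    have hrk : (0:ℝ) < r * 2 ^ k := by positivity
    have hAmeas : MeasurableSet (A k) :=
      (measurableSet_le measurable_const measurable_norm).inter
        (measurableSet_lt measurable_norm measurable_const)
    have step1 : ∫⁻ x in A k, g x ∂volume
        ≤ ∫⁻ _ in A k, ENNReal.ofReal (M * (r * 2 ^ k) ^ (-p)) ∂volume := by
      refine setLIntegral_mono' hAmeas fun x hx => ?_
      exact ENNReal.ofReal_le_ofReal (mul_le_mul_of_nonneg_left
        (Real.rpow_le_rpow_of_nonpos hrk hx.1 (by linarith)) hM0)
    have step2 : volume (A k) ≤ volume (ball (0 : EuclideanSpace ℝ (Fin n)) (r * 2 ^ (k+1))) := by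
      apply measure_mono
      intro x hx
      rw [mem_ball_zero_iff]
      exact hx.2
    have step3 : volume (ball (0 : EuclideanSpace ℝ (Fin n)) (r * 2 ^ (k+1)))
        = ENNReal.ofReal ((r * 2 ^ (k+1)) ^ n) * ENNReal.ofReal v := by
      rw [Measure.addHaar_ball _ _ (by positivity : (0:ℝ) ≤ r * 2 ^ (k+1)),
        finrank_euclideanSpace_fin, hv, ENNReal.ofReal_toReal hVfin]
    calc ∫⁻ x in A k, g x ∂volume
        ≤ ∫⁻ _ in A k, ENNReal.ofReal (M * (r * 2 ^ k) ^ (-p)) ∂volume := step1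
      _ = ENNReal.ofReal (M * (r * 2 ^ k) ^ (-p)) * volume (A k) := setLIntegral_const _ _
      _ ≤ ENNReal.ofReal (M * (r * 2 ^ k) ^ (-p))
            * (ENNReal.ofReal ((r * 2 ^ (k+1)) ^ n) * ENNReal.ofReal v) := by
          rw [← step3]; exact mul_le_mul_right step2 _
      _ = ENNReal.ofReal (M * (r * 2 ^ k) ^ (-p) * (r * 2 ^ (k+1)) ^ n * v) := by
          rw [← ENNReal.ofReal_mul (by positivity), ← ENNReal.ofReal_mul (by positivity)]
          congr 1
          ring
      _ = ENNReal.ofReal (C * 2 ^ (2 * n) * ((2:ℝ) ^ (-q)) ^ k * v) := by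
          rw [hterm k]
      _ = ENNReal.ofReal (C * 2 ^ (2 * n) * v) * (ENNReal.ofReal ((2:ℝ) ^ (-q))) ^ k := by
          rw [← ENNReal.ofReal_pow h2qpos.le,
            ← ENNReal.ofReal_mul (by positivity)]
          congr 1
          ring
  -- sum up
  have hgeo : ∑' k : ℕ, (ENNReal.ofReal ((2:ℝ) ^ (-q))) ^ k
      = ENNReal.ofReal ((1 - 2 ^ (-q))⁻¹) := by
    rw [ENNReal.tsum_geometric]
    rw [show (1:ℝ≥0∞) - ENNReal.ofReal ((2:ℝ) ^ (-q)) = ENNReal.ofReal (1 - 2 ^ (-q)) by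
      rw [← ENNReal.ofReal_one, ← ENNReal.ofReal_sub _ h2qpos.le]]
    rw [← ENNReal.ofReal_inv_of_pos h1m2q]
  calc ∫⁻ x in {x : EuclideanSpace ℝ (Fin n) | 2 * R ^ (1 - θ) ≤ ‖x‖},
        (‖K (x - y) - K x‖₊ : ℝ≥0∞) ∂volume
      ≤ ∫⁻ x in {x : EuclideanSpace ℝ (Fin n) | 2 * R ^ (1 - θ) ≤ ‖x‖}, g x ∂volume := by
        refine setLIntegral_mono' hSmeas fun x hx => ?_
        rw [← ENNReal.ofReal_coe_nnreal, coe_nnnorm]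
        exact ENNReal.ofReal_le_ofReal (hpt x (by rw [hr]; exact hx))
    _ ≤ ∫⁻ x in ⋃ k, A k, g x ∂volume := lintegral_mono_set hSsub
    _ ≤ ∑' k : ℕ, ∫⁻ x in A k, g x ∂volume := lintegral_iUnion_le _ _
    _ ≤ ∑' k : ℕ, ENNReal.ofReal (C * 2 ^ (2 * n) * v) * (ENNReal.ofReal ((2:ℝ) ^ (-q))) ^ k :=
        ENNReal.tsum_le_tsum hAk
    _ = ENNReal.ofReal (C * 2 ^ (2 * n) * v) * ENNReal.ofReal ((1 - 2 ^ (-q))⁻¹) := by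
        rw [ENNReal.tsum_mul_left, hgeo]
    _ = ENNReal.ofReal (2 ^ (2*n) * v * (1 - 2 ^ (-q))⁻¹ * C) := by
        rw [← ENNReal.ofReal_mul (by positivity)]
        congr 1
        ring
end

section
/- Let (X, μ) be a measure space, let ι be a countable index set, let g : ι → X → ℂ be a family of measurable functions, and let N ∈ ℕ be such that for μ-almost every x ∈ X the set {i ∈ ι : g i x ≠ 0} has at most N elements. Then ∫ (∑_{i ∈ ι} |g i x|)² dμ(x) ≤ N · ∑_{i ∈ ι} ∫ |g i x|² dμ(x), where the integrals and sums take values in [0, ∞]. -/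
open MeasureTheory
open scoped ENNReal

lemma finset_sq_sum_le_card_mul_sum_sq {ι : Type*} (s : Finset ι) (f : ι → ℝ≥0∞) :
    (∑ i ∈ s, f i) ^ 2 ≤ (s.card : ℝ≥0∞) * ∑ i ∈ s, f i ^ 2 := by
  by_cases htop : ∃ i ∈ s, f i = ⊤
  · obtain ⟨i, hi, hfi⟩ := htop
    have h1 : (∑ i ∈ s, f i ^ 2) = ⊤ :=
      ENNReal.sum_eq_top.2 ⟨i, hi, by simp [hfi]⟩
    have hc : (s.card : ℝ≥0∞) ≠ 0 := by
      simp only [ne_eq, Nat.cast_eq_zero, Finset.card_eq_zero]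
      rintro rfl; exact absurd hi (by simp)
    rw [h1, ENNReal.mul_top hc]
    exact le_top
  · push_neg at htop
    set a : ι → NNReal := fun i => (f i).toNNReal with ha
    have hfa : ∀ i ∈ s, f i = (a i : ℝ≥0∞) := fun i hi =>
      (ENNReal.coe_toNNReal (htop i hi)).symm
    calc (∑ i ∈ s, f i) ^ 2 = ((∑ i ∈ s, a i : NNReal) : ℝ≥0∞) ^ 2 := by
          rw [Finset.sum_congr rfl hfa, ENNReal.coe_finset_sum]
      _ = (((∑ i ∈ s, a i) ^ 2 : NNReal) : ℝ≥0∞) := by rw [ENNReal.coe_pow]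
      _ ≤ (((s.card : NNReal) * ∑ i ∈ s, a i ^ 2 : NNReal) : ℝ≥0∞) := by
          exact_mod_cast ENNReal.coe_le_coe.2 sq_sum_le_card_mul_sum_sq
      _ = (s.card : ℝ≥0∞) * ∑ i ∈ s, f i ^ 2 := by
          rw [ENNReal.coe_mul, ENNReal.coe_finset_sum]
          congr 1
          exact Finset.sum_congr rfl fun i hi => by rw [hfa i hi, ENNReal.coe_pow]

lemma tsum_sq_le_of_encard_le {ι : Type*} [Countable ι] {f : ι → ℝ≥0∞} {N : ℕ}
    (h : Set.encard {i | f i ≠ 0} ≤ (N : ℕ∞)) :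
    (∑' i, f i) ^ 2 ≤ (N : ℝ≥0∞) * ∑' i, f i ^ 2 := by
  have hfin : {i | f i ≠ 0}.Finite := Set.finite_of_encard_le_coe h
  set s := hfin.toFinset with hs
  have hcard : (s.card : ℝ≥0∞) ≤ (N : ℝ≥0∞) := by
    rw [hfin.encard_eq_coe_toFinset_card] at h
    exact_mod_cast Nat.cast_le.2 (by exact_mod_cast h)
  have h1 : ∑' i, f i = ∑ i ∈ s, f i :=
    tsum_eq_sum (fun i hi => by simpa [hs] using fun h' => hi (hfin.mem_toFinset.2 h'))
  have h2 : ∑' i, f i ^ 2 = ∑ i ∈ s, f i ^ 2 :=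
    tsum_eq_sum (fun i hi => by
      have : f i = 0 := by_contra fun h' => hi (hfin.mem_toFinset.2 h')
      simp [this])
  rw [h1, h2]
  exact (finset_sq_sum_le_card_mul_sum_sq s f).trans (by gcongr)

/-- **Almost-orthogonality from bounded overlap.** If at almost every point at most `N` of the
functions `g i` are nonzero, then `∫ (∑_i |g i|)² dμ ≤ N ∑_i ∫ |g i|² dμ`. -/
theorem lintegral_sq_tsum_le_of_bounded_overlap
    {X : Type*} [MeasurableSpace X] (μ : Measure X)
    {ι : Type*} [Countable ι] (g : ι → X → ℂ) (hg : ∀ i, Measurable (g i))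
    (N : ℕ) (hN : ∀ᵐ x ∂μ, Set.encard {i : ι | g i x ≠ 0} ≤ (N : ℕ∞)) :
    ∫⁻ x, (∑' i : ι, (‖g i x‖₊ : ℝ≥0∞)) ^ 2 ∂μ ≤
      (N : ℝ≥0∞) * ∑' i : ι, ∫⁻ x, (‖g i x‖₊ : ℝ≥0∞) ^ 2 ∂μ := by
  have key : ∀ᵐ x ∂μ, (∑' i : ι, (‖g i x‖₊ : ℝ≥0∞)) ^ 2 ≤
      (N : ℝ≥0∞) * ∑' i : ι, (‖g i x‖₊ : ℝ≥0∞) ^ 2 := by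
    filter_upwards [hN] with x hx
    refine tsum_sq_le_of_encard_le ?_
    convert hx using 3
    simp
  calc ∫⁻ x, (∑' i : ι, (‖g i x‖₊ : ℝ≥0∞)) ^ 2 ∂μ
      ≤ ∫⁻ x, (N : ℝ≥0∞) * ∑' i : ι, (‖g i x‖₊ : ℝ≥0∞) ^ 2 ∂μ := lintegral_mono_ae key
    _ = (N : ℝ≥0∞) * ∫⁻ x, ∑' i : ι, (‖g i x‖₊ : ℝ≥0∞) ^ 2 ∂μ :=
        lintegral_const_mul' _ _ (by simp)
    _ = (N : ℝ≥0∞) * ∑' i : ι, ∫⁻ x, (‖g i x‖₊ : ℝ≥0∞) ^ 2 ∂μ := by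
        rw [lintegral_tsum fun i => ((hg i).nnnorm.coe_nnreal_ennreal.pow_const 2).aemeasurable]
end

section
/- Let G be a group equipped with a left-invariant Borel measure μ and a left-invariant metric d, with measurable group operations; write |x| := d(x, e). Let (x_j)_{j ∈ J} be a countable family of points of G, (r_j), (R_j) families of positive reals with 0 < μ(B(e,R_j)) < ∞ for each j, set I_j := B(x_j, r_j) and φ_j := μ(B(e,R_j))^{-1} 1_{B(e,R_j)}, and suppose there is M ∈ ℕ such that every point of G belongs to at most M of the balls B(x_j, r_j + R_j). Then for every x ∈ G, ∑_{j ∈ J} (1_{I_j} ⋆ φ_j)(x) ≤ M. -/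
open MeasureTheory
open scoped ENNReal

/-- **Bounded overlap of mollified indicators.** If every point of `G` lies in at most `M` of
the balls `B(x_j, r_j + R_j)`, then the sum of the convolutions of the indicators `1_{I_j}`,
`I_j = B(x_j, r_j)`, with the normalized indicators `φ_j` of the balls `B(e, R_j)` is
pointwise bounded by `M`. -/
theorem tsum_indicator_conv_le_of_bounded_overlap
    {G : Type*} [Group G] [MetricSpace G] [MeasurableSpace G] [BorelSpace G]
    [MeasurableMul₂ G] [MeasurableInv G]
    (μ : Measure G) [μ.IsMulLeftInvariant]
    (hd : ∀ a x y : G, dist (a * x) (a * y) = dist x y)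
    {J : Type*} [Countable J] (xc : J → G) (r R : J → ℝ)
    (hr : ∀ j, 0 < r j) (hR : ∀ j, 0 < R j)
    (hB0 : ∀ j, 0 < μ (Metric.ball (1 : G) (R j)))
    (hBfin : ∀ j, μ (Metric.ball (1 : G) (R j)) < ⊤)
    (M : ℕ)
    (hM : ∀ x : G, Set.encard {j : J | x ∈ Metric.ball (xc j) (r j + R j)} ≤ (M : ℕ∞)) :
    ∀ x : G,
      ∑' j : J, ENNReal.ofReal
          (∫ y, Set.indicator (Metric.ball (xc j) (r j)) (fun _ => (1 : ℝ)) y *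
            Set.indicator (Metric.ball (1 : G) (R j))
              (fun _ => ((μ (Metric.ball (1 : G) (R j))).toReal)⁻¹) (y⁻¹ * x) ∂μ) ≤
        (M : ℝ≥0∞) := by
  intro x
  set s : Set J := {j : J | x ∈ Metric.ball (xc j) (r j + R j)} with hs
  have key : ∀ j : J, ENNReal.ofReal
      (∫ y, Set.indicator (Metric.ball (xc j) (r j)) (fun _ => (1 : ℝ)) y *
        Set.indicator (Metric.ball (1 : G) (R j))
          (fun _ => ((μ (Metric.ball (1 : G) (R j))).toReal)⁻¹) (y⁻¹ * x) ∂μ) ≤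
      s.indicator (fun _ => (1 : ℝ≥0∞)) j := by
    intro j
    set B : Set G := Metric.ball (1 : G) (R j) with hB
    set c : ℝ := ((μ B).toReal)⁻¹ with hc
    have hc0 : 0 ≤ c := inv_nonneg.2 ENNReal.toReal_nonneg
    by_cases hj : j ∈ s
    · rw [Set.indicator_of_mem hj]
      rw [ENNReal.ofReal_le_one]
      -- bound the integral by 1
      set S : Set G := (fun y : G => y⁻¹ * x) ⁻¹' B with hS
      have hmeas : Measurable (fun y : G => y⁻¹ * x) := measurable_inv.mul_const x
      have hSmeas : MeasurableSet S := hmeas Metric.isOpen_ball.measurableSet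
      have hSeq : S = (fun y : G => x⁻¹ * y) ⁻¹' B := by
        ext y
        simp only [hS, Set.mem_preimage, hB, Metric.mem_ball]
        have h1 : dist (y⁻¹ * x) 1 = dist 1 (x⁻¹ * y) := by
          have := hd (x⁻¹ * y) (y⁻¹ * x) 1
          simpa [mul_assoc] using this.symm
        rw [h1, dist_comm]
      have hSμ : μ S = μ B := by
        rw [hSeq]
        exact measure_preimage_mul μ x⁻¹ B
      have hint : Integrable (S.indicator fun _ => c) μ := by
        rw [integrable_indicator_iff hSmeas]
        exact integrableOn_const (by rw [hSμ]; exact (hBfin j).ne)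
      have hle : ∀ y : G,
          Set.indicator (Metric.ball (xc j) (r j)) (fun _ => (1 : ℝ)) y *
            B.indicator (fun _ => c) (y⁻¹ * x) ≤ S.indicator (fun _ => c) y := by
        intro y
        have h2 : B.indicator (fun _ => c) (y⁻¹ * x) = S.indicator (fun _ => c) y := by
          by_cases hy : y⁻¹ * x ∈ B
          · rw [Set.indicator_of_mem hy, Set.indicator_of_mem (show y ∈ S from hy)]
          · rw [Set.indicator_of_notMem hy,
              Set.indicator_of_notMem (show y ∉ S from hy)]
        rw [h2]
        have h3 : Set.indicator (Metric.ball (xc j) (r j)) (fun _ => (1 : ℝ)) y ≤ 1 := by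
          by_cases hy : y ∈ Metric.ball (xc j) (r j) <;> simp [Set.indicator, hy]
        calc Set.indicator (Metric.ball (xc j) (r j)) (fun _ => (1 : ℝ)) y *
              S.indicator (fun _ => c) y
            ≤ 1 * S.indicator (fun _ => c) y := by
              apply mul_le_mul_of_nonneg_right h3
              exact Set.indicator_nonneg (fun _ _ => hc0) y
          _ = S.indicator (fun _ => c) y := one_mul _
      have hnn : ∀ y : G, 0 ≤
          Set.indicator (Metric.ball (xc j) (r j)) (fun _ => (1 : ℝ)) y *
            B.indicator (fun _ => c) (y⁻¹ * x) := fun y =>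
        mul_nonneg (Set.indicator_nonneg (fun _ _ => zero_le_one) y)
          (Set.indicator_nonneg (fun _ _ => hc0) _)
      calc (∫ y, Set.indicator (Metric.ball (xc j) (r j)) (fun _ => (1 : ℝ)) y *
              B.indicator (fun _ => c) (y⁻¹ * x) ∂μ)
          ≤ ∫ y, S.indicator (fun _ => c) y ∂μ :=
            integral_mono_of_nonneg (Filter.Eventually.of_forall hnn) hint
              (Filter.Eventually.of_forall hle)
        _ = (μ S).toReal • c := integral_indicator_const c hSmeas
        _ = 1 := by
            rw [hSμ, smul_eq_mul, hc]
            exact mul_inv_cancel₀ (ENNReal.toReal_ne_zero.2 ⟨(hB0 j).ne', (hBfin j).ne⟩)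
    · rw [Set.indicator_of_notMem hj]
      have hz : ∀ y : G,
          Set.indicator (Metric.ball (xc j) (r j)) (fun _ => (1 : ℝ)) y *
            B.indicator (fun _ => c) (y⁻¹ * x) = 0 := by
        intro y
        by_cases hy1 : y ∈ Metric.ball (xc j) (r j)
        · by_cases hy2 : y⁻¹ * x ∈ B
          · exfalso
            apply hj
            simp only [hs, Set.mem_setOf_eq, Metric.mem_ball]
            have hdxy : dist x y < R j := by
              have h1 : dist (y⁻¹ * x) 1 < R j := by
                simpa [hB, Metric.mem_ball] using hy2
              have h2 : dist x y = dist (y⁻¹ * x) 1 := by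
                simpa using hd y (y⁻¹ * x) 1
              rw [h2]; exact h1
            have hdyx : dist y (xc j) < r j := by
              simpa [Metric.mem_ball] using hy1
            calc dist x (xc j) ≤ dist x y + dist y (xc j) := dist_triangle _ _ _
              _ < R j + r j := add_lt_add hdxy hdyx
              _ = r j + R j := add_comm _ _
          · rw [Set.indicator_of_notMem hy2, mul_zero]
        · rw [Set.indicator_of_notMem hy1, zero_mul]
      have : (∫ y, Set.indicator (Metric.ball (xc j) (r j)) (fun _ => (1 : ℝ)) y *
          B.indicator (fun _ => c) (y⁻¹ * x) ∂μ) = 0 := by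
        simp only [hz, integral_zero]
      rw [this, ENNReal.ofReal_zero]
  calc ∑' j : J, ENNReal.ofReal
        (∫ y, Set.indicator (Metric.ball (xc j) (r j)) (fun _ => (1 : ℝ)) y *
          Set.indicator (Metric.ball (1 : G) (R j))
            (fun _ => ((μ (Metric.ball (1 : G) (R j))).toReal)⁻¹) (y⁻¹ * x) ∂μ)
      ≤ ∑' j : J, s.indicator (fun _ => (1 : ℝ≥0∞)) j := ENNReal.tsum_le_tsum key
    _ = ∑' _ : s, (1 : ℝ≥0∞) := (tsum_subtype s _).symm
    _ = s.encard := ENNReal.tsum_set_one s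
    _ ≤ ((M : ℕ∞) : ℝ≥0∞) := ENat.toENNReal_le.2 (hM x)
    _ = (M : ℝ≥0∞) := ENat.toENNReal_coe M
end

section
/- Let G be a compact Lie group (a group carrying a compact smooth manifold structure for which multiplication and inversion are smooth). For every open neighborhood U of the identity e ∈ G there exist N ∈ ℕ, points x₁, …, x_N ∈ G, and smooth functions χ₁, …, χ_N : G → ℝ with 0 ≤ χ_k(x) ≤ 1 for all x, with the support of each χ_k contained in U, and such that ∑_{k=1}^{N} χ_k(x_k⁻¹ x) = 1 for every x ∈ G. -/
open scoped Manifold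

/-- **Smooth partition of unity adapted to translations on a compact Lie group.** For every
open neighborhood `U` of the identity of a compact Lie group `G` there are finitely many
points `x 1, …, x N` and smooth functions `χ 1, …, χ N : G → ℝ` with values in `[0,1]`,
supported in `U`, such that `∑ k, χ k (x k⁻¹ * z) = 1` for every `z ∈ G`. -/
theorem compact_lieGroup_partition_of_unity
    {E : Type*} [NormedAddCommGroup E] [NormedSpace ℝ E]
    {H : Type*} [TopologicalSpace H] (I : ModelWithCorners ℝ E H)
    (G : Type*) [TopologicalSpace G] [ChartedSpace H G] [Group G] [LieGroup I (⊤ : ℕ∞) G]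
    [CompactSpace G]
    (U : Set G) (hU : IsOpen U) (heU : (1 : G) ∈ U) :
    ∃ (N : ℕ) (x : Fin N → G) (χ : Fin N → G → ℝ),
      (∀ k, ContMDiff I 𝓘(ℝ) (⊤ : ℕ∞) (χ k)) ∧
      (∀ k z, χ k z ∈ Set.Icc (0 : ℝ) 1) ∧
      (∀ k, Function.support (χ k) ⊆ U) ∧
      (∀ z : G, ∑ k : Fin N, χ k ((x k)⁻¹ * z) = 1) := by
  classical
  haveI : IsTopologicalGroup G := topologicalGroup_of_lieGroup I (⊤ : ℕ∞)
  -- `G` is Hausdorff: it is T0 (via charts into the Hausdorff space `E`) and a topological group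
  haveI : T0Space G := by
    refine t0Space_iff_inseparable G |>.mpr fun a b h ↦ ?_
    have hb : b ∈ (extChartAt I a).source := by
      have hsrc : (extChartAt I a).source ∈ nhds a :=
        (isOpen_extChartAt_source a).mem_nhds (mem_extChartAt_source a)
      rw [h.nhds_eq] at hsrc
      exact mem_of_mem_nhds hsrc
    have hca : ContinuousAt (extChartAt I a) a := continuousAt_extChartAt a
    have hcb : ContinuousAt (extChartAt I a) b := continuousAt_extChartAt' hb
    have key : extChartAt I a a = extChartAt I a b := by
      apply eq_of_nhds_neBot
      refine Filter.neBot_of_le (f := Filter.map (extChartAt I a) (nhds a)) ?_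
      refine le_inf hca ?_
      rw [h.nhds_eq]
      exact hcb
    exact (extChartAt I a).injOn (mem_extChartAt_source a) hb key
  haveI : T2Space G := inferInstance
  haveI : LocallyCompactSpace G := inferInstance
  haveI : Inhabited G := ⟨1⟩
  haveI : FiniteDimensional ℝ E := FiniteDimensional.of_locallyCompact_manifold (M := G) I
  haveI : SigmaCompactSpace G := inferInstance
  -- the open cover by left translates of `U`
  set W : G → Set G := fun g => (fun z => g⁻¹ * z) ⁻¹' U with hW
  have hWopen : ∀ g, IsOpen (W g) := fun g => hU.preimage (continuous_mul_left g⁻¹)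
  have hWcover : (Set.univ : Set G) ⊆ ⋃ g, W g := fun z _ =>
    Set.mem_iUnion.2 ⟨z, by simp [hW, heU]⟩
  obtain ⟨f, hf⟩ := SmoothPartitionOfUnity.exists_isSubordinate I isClosed_univ W hWopen hWcover
  -- only finitely many functions in the partition of unity are nonzero
  have hfin : {g : G | (Function.support (f g)).Nonempty}.Finite :=
    f.locallyFinite.finite_nonempty_of_compact
  set s : Finset G := hfin.toFinset with hs
  refine ⟨s.card, fun k => (s.equivFin.symm k : G), fun k y => f (s.equivFin.symm k : G)
      ((s.equivFin.symm k : G) * y), ?_, ?_, ?_, ?_⟩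
  · intro k
    exact (f _).contMDiff.comp contMDiff_mul_left
  · intro k z
    exact ⟨f.nonneg _ _, f.le_one _ _⟩
  · intro k y hy
    have hmem : (s.equivFin.symm k : G) * y ∈
        Function.support (f (s.equivFin.symm k : G)) := hy
    have := hf (s.equivFin.symm k : G) (subset_tsupport _ hmem)
    simpa [hW] using this
  · intro z
    have hsum : ∀ k : Fin s.card,
        f (s.equivFin.symm k : G) ((s.equivFin.symm k : G) *
          ((s.equivFin.symm k : G)⁻¹ * z)) = f (s.equivFin.symm k : G) z := by
      intro k; rw [mul_inv_cancel_left]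
    rw [Finset.sum_congr rfl fun k _ => hsum k]
    have h1 : ∑ k : Fin s.card, f (s.equivFin.symm k : G) z = ∑ g ∈ s, f g z := by
      rw [← Finset.sum_attach s (fun g => f g z)]
      exact Fintype.sum_equiv s.equivFin.symm _ _ (fun k => rfl)
    rw [h1]
    have h2 : Function.support (fun g => f g z) ⊆ (s : Set G) := by
      intro g hg
      simp only [hs, Set.Finite.coe_toFinset]
      exact ⟨z, hg⟩
    rw [← finsum_eq_sum_of_support_subset _ h2]
    exact f.sum_eq_one (Set.mem_univ z)
end
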